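/- Let p ≥ 3 be prime, j ∈ {1,…,p−1}, and let a ∈ ℚ_p satisfy |a|_p = 1 and |a^{p−1} − 1|_p ≤ p^{-2}. Define f : ℚ_p → ℂ by f(x) = ∑_{i=0}^{p−2} ψ( j·p^{-1}·(a^{-i} x − 1) ), where j is regarded as an element of ℚ_p. Then f(a^{-1} x) = f(x) for all x ∈ ℚ_p, i.e. G(a,0)f = f. -/

import Mathlib

open MeasureTheory

/-- Action of the `p`-adic affine group on complex-valued functions:
`(G(a,b)f)(x) = |a|_p^{-1/2} f((x-b)/a)`. -/
noncomputable def Gact (p : ℕ) [Fact p.Prime] (a b : ℚ_[p]) (f : ℚ_[p] → ℂ) : ℚ_[p] → ℂ :=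
  fun x => ((‖a‖ ^ (-(1/2) : ℝ) : ℝ) : ℂ) * f ((x - b) / a)

/-- `Ω(|x|_p)`: the indicator function of the unit ball `ℤ_p`. -/
noncomputable def Omega (p : ℕ) [Fact p.Prime] : ℚ_[p] → ℂ :=
  fun x => if ‖x‖ ≤ 1 then 1 else 0

/-- `R_σ`: the set of finite sums `∑_{l=-δ}^{σ-1} n_l p^l` with digits `n_l ∈ {0,…,p-1}`,
a complete set of representatives of `ℚ_p / p^σ ℤ_p`. -/
def Rset (p : ℕ) [Fact p.Prime] (σ : ℤ) : Set ℚ_[p] :=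
  { x | ∃ (δ : ℕ) (d : ℤ → ℕ), (∀ l, d l < p) ∧
      x = ∑ l ∈ Finset.Icc (-(δ : ℤ)) (σ - 1), (d l : ℚ_[p]) * (p : ℚ_[p]) ^ l }

/-- The `p`-adic wavelet `ψ_{γ n j}(x) = p^{-γ/2} χ(p⁻¹ j (p^γ x - n)) Ω(|p^γ x - n|_p)`. -/
noncomputable def wavelet (p : ℕ) [Fact p.Prime] (χ : ℚ_[p] → ℂ) (γ : ℤ) (n : ℚ_[p]) (j : ℕ) :
    ℚ_[p] → ℂ :=
  fun x => (((p : ℝ) ^ (-(γ : ℝ) / 2) : ℝ) : ℂ) *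
    χ ((p : ℚ_[p])⁻¹ * (j : ℚ_[p]) * ((p : ℚ_[p]) ^ γ * x - n)) *
    Omega p ((p : ℚ_[p]) ^ γ * x - n)

/-- The basic `p`-adic wavelet `ψ(x) = χ(p⁻¹ x) Ω(|x|_p)`. -/
noncomputable def psiw (p : ℕ) [Fact p.Prime] (χ : ℚ_[p] → ℂ) : ℚ_[p] → ℂ :=
  fun x => χ ((p : ℚ_[p])⁻¹ * x) * Omega p x


section Aux

variable {p : ℕ} [Fact p.Prime]

lemma norm_eq_one_of_close {v : ℚ_[p]} (h : ‖v - 1‖ < 1) : ‖v‖ = 1 := by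
  have hv : v = 1 + (v - 1) := by ring
  have hne : ‖(1 : ℚ_[p])‖ ≠ ‖v - 1‖ := by
    rw [norm_one]; exact (ne_of_lt h).symm
  rw [hv, Padic.add_eq_max_of_ne hne, norm_one]
  exact max_eq_left h.le

lemma close_imp (hp2 : (p : ℝ) ^ (-2 : ℤ) < 1) (hp21 : (p : ℝ) ^ (-2 : ℤ) ≤ (p : ℝ)⁻¹)
    (v w : ℚ_[p]) (hv : ‖v - 1‖ ≤ (p : ℝ) ^ (-2 : ℤ))
    (hvw : ‖v * w - 1‖ ≤ (p : ℝ)⁻¹) : ‖w - 1‖ ≤ (p : ℝ)⁻¹ := by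
  have hp1 : (p : ℝ)⁻¹ < 1 := by
    have : (1 : ℝ) < p := by exact_mod_cast (Fact.out : p.Prime).one_lt
    rw [inv_lt_one_iff₀]; right; exact this
  have hvn : ‖v‖ = 1 := norm_eq_one_of_close (lt_of_le_of_lt hv hp2)
  have hvwn : ‖v * w‖ = 1 := norm_eq_one_of_close (lt_of_le_of_lt hvw hp1)
  have hwn : ‖w‖ = 1 := by
    rw [norm_mul, hvn, one_mul] at hvwn; exact hvwn
  have key : w - 1 = (v * w - 1) + (-(v - 1)) * w := by ring
  rw [key]
  refine le_trans (Padic.nonarchimedean _ _) (max_le hvw ?_)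
  rw [norm_mul, norm_neg, hwn, mul_one]
  exact le_trans hv hp21

end Aux

theorem stmt_6 (p : ℕ) [Fact p.Prime] (hp : 3 ≤ p) (χ : ℚ_[p] → ℂ)
    (hχ_add : ∀ x y : ℚ_[p], χ (x + y) = χ x * χ y)
    (hχ_norm : ∀ x : ℚ_[p], ‖χ x‖ = 1)
    (hχ_triv : ∀ x : ℚ_[p], ‖x‖ ≤ 1 → χ x = 1)
    (hχ_nontriv : χ ((p : ℚ_[p])⁻¹) ≠ 1)
    (j : ℕ) (hj : 1 ≤ j ∧ j ≤ p - 1)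
    (a : ℚ_[p]) (ha : ‖a‖ = 1) (ha' : ‖a ^ (p - 1) - 1‖ ≤ (p : ℝ) ^ (-2 : ℤ))
    (f : ℚ_[p] → ℂ)
    (hf : f = fun x => ∑ i ∈ Finset.range (p - 1),
      psiw p χ ((j : ℚ_[p]) * (p : ℚ_[p])⁻¹ * ((a ^ i)⁻¹ * x - 1))) :
    ∀ x : ℚ_[p], f (a⁻¹ * x) = f x := by
  have hprime : p.Prime := Fact.out
  have hpR : (1 : ℝ) < p := by exact_mod_cast hprime.one_lt
  have hp0 : (0 : ℝ) < p := by linarith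
  -- basic norm facts
  have hp2 : (p : ℝ) ^ (-2 : ℤ) = ((p : ℝ) * p)⁻¹ := by
    rw [zpow_neg, zpow_two]
  have hp2lt : (p : ℝ) ^ (-2 : ℤ) < 1 := by
    rw [hp2, inv_lt_one_iff₀]; right; nlinarith
  have hp21 : (p : ℝ) ^ (-2 : ℤ) ≤ (p : ℝ)⁻¹ := by
    rw [hp2]
    rw [inv_le_inv₀ (by nlinarith) hp0]
    nlinarith
  have hjnorm : ‖(j : ℚ_[p])‖ = 1 := by
    have hle : ‖(j : ℚ_[p])‖ ≤ 1 := by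
      have := Padic.norm_int_le_one (p := p) (j : ℤ)
      simpa using this
    rcases lt_or_eq_of_le hle with h | h
    · exfalso
      have := (Padic.norm_intCast_lt_one_iff (p := p) (k := (j : ℤ))).1 (by simpa using h)
      have hdvd : p ∣ j := by exact_mod_cast this
      have := Nat.le_of_dvd (by omega) hdvd
      omega
    · exact h
  have hpinv : ‖((p : ℚ_[p]))⁻¹‖ = p := by
    rw [norm_inv, Padic.norm_p, inv_inv]
  -- norm of the coefficient j/p
  have hcoef : ∀ z : ℚ_[p], ‖(j : ℚ_[p]) * (p : ℚ_[p])⁻¹ * z‖ = p * ‖z‖ := by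
    intro z
    rw [norm_mul, norm_mul, hjnorm, hpinv, one_mul]
  -- key lemma: psiw agrees under multiplication by u close to 1
  have key : ∀ u x : ℚ_[p], ‖u - 1‖ ≤ (p : ℝ) ^ (-2 : ℤ) →
      psiw p χ ((j : ℚ_[p]) * (p : ℚ_[p])⁻¹ * (u * x - 1)) =
      psiw p χ ((j : ℚ_[p]) * (p : ℚ_[p])⁻¹ * (x - 1)) := by
    intro u x hu
    have hun : ‖u‖ = 1 := norm_eq_one_of_close (lt_of_le_of_lt hu hp2lt)
    have hu0 : u ≠ 0 := by intro h; rw [h, norm_zero] at hun; norm_num at hun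
    have huinv : ‖u⁻¹ - 1‖ ≤ (p : ℝ) ^ (-2 : ℤ) := by
      have : u⁻¹ - 1 = u⁻¹ * (-(u - 1)) := by field_simp; ring
      rw [this, norm_mul, norm_inv, hun, norm_neg, inv_one, one_mul]
      exact hu
    have hiff : ‖u * x - 1‖ ≤ (p : ℝ)⁻¹ ↔ ‖x - 1‖ ≤ (p : ℝ)⁻¹ := by
      constructor
      · intro h; exact close_imp hp2lt hp21 u x hu h
      · intro h
        refine close_imp hp2lt hp21 u⁻¹ (u * x) huinv ?_
        rwa [show u⁻¹ * (u * x) = x by field_simp]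
    have hc : ∀ z : ℚ_[p], ‖(j : ℚ_[p]) * (p : ℚ_[p])⁻¹ * z‖ ≤ 1 ↔ ‖z‖ ≤ (p : ℝ)⁻¹ := by
      intro z
      rw [hcoef, ← le_div_iff₀' hp0, one_div]
    simp only [psiw, Omega]
    by_cases h : ‖x - 1‖ ≤ (p : ℝ)⁻¹
    · rw [if_pos ((hc _).2 ((hiff).2 h)), if_pos ((hc _).2 h), mul_one, mul_one]
      have hx1 : ‖x‖ = 1 := norm_eq_one_of_close (lt_of_le_of_lt h (by
        rw [inv_lt_one_iff₀]; right; exact hpR))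
      have hsplit : (p : ℚ_[p])⁻¹ * ((j : ℚ_[p]) * (p : ℚ_[p])⁻¹ * (u * x - 1)) =
          (p : ℚ_[p])⁻¹ * ((j : ℚ_[p]) * (p : ℚ_[p])⁻¹ * (x - 1)) +
          (p : ℚ_[p])⁻¹ * ((j : ℚ_[p]) * (p : ℚ_[p])⁻¹) * ((u - 1) * x) := by ring
      have hsmall : ‖(p : ℚ_[p])⁻¹ * ((j : ℚ_[p]) * (p : ℚ_[p])⁻¹) * ((u - 1) * x)‖ ≤ 1 := by
        rw [norm_mul, norm_mul, norm_mul, norm_mul, hpinv, hjnorm, hx1, one_mul, mul_one]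
        calc (p : ℝ) * p * ‖u - 1‖ ≤ (p : ℝ) * p * ((p : ℝ) * p)⁻¹ := by
              rw [hp2] at hu
              exact mul_le_mul_of_nonneg_left hu (by positivity)
          _ = 1 := by field_simp
      rw [hsplit, hχ_add, hχ_triv _ hsmall, mul_one]
    · rw [if_neg (fun hh => h ((hiff).1 ((hc _).1 hh))), if_neg (fun hh => h ((hc _).1 hh)),
        mul_zero, mul_zero]
  -- reindex the sum
  intro x
  subst hf
  simp only
  have ha0 : a ≠ 0 := by intro h; rw [h, norm_zero] at ha; norm_num at ha
  set g : ℕ → ℂ := fun i => psiw p χ ((j : ℚ_[p]) * (p : ℚ_[p])⁻¹ * ((a ^ i)⁻¹ * x - 1))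
    with hg
  have hshift : ∀ i : ℕ, psiw p χ ((j : ℚ_[p]) * (p : ℚ_[p])⁻¹ * ((a ^ i)⁻¹ * (a⁻¹ * x) - 1))
      = g (i + 1) := by
    intro i
    rw [hg]
    congr 2
    rw [pow_succ, mul_inv_rev]
    ring
  have hgcycle : g (p - 1) = g 0 := by
    rw [hg]
    simp only [pow_zero, inv_one, one_mul]
    have hnorm : ‖(a ^ (p - 1))⁻¹ - 1‖ ≤ (p : ℝ) ^ (-2 : ℤ) := by
      have han : ‖a ^ (p - 1)‖ = 1 := by rw [norm_pow, ha, one_pow]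
      have hane : a ^ (p - 1) ≠ 0 := pow_ne_zero _ ha0
      have : (a ^ (p - 1))⁻¹ - 1 = (a ^ (p - 1))⁻¹ * (-(a ^ (p - 1) - 1)) := by field_simp; ring
      rw [this, norm_mul, norm_inv, han, norm_neg, inv_one, one_mul]
      exact ha'
    have := key ((a ^ (p - 1))⁻¹) x hnorm
    simpa using this
  calc (∑ i ∈ Finset.range (p - 1),
        psiw p χ ((j : ℚ_[p]) * (p : ℚ_[p])⁻¹ * ((a ^ i)⁻¹ * (a⁻¹ * x) - 1)))
      = ∑ i ∈ Finset.range (p - 1), g (i + 1) := by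
        exact Finset.sum_congr rfl (fun i _ => hshift i)
    _ = (∑ i ∈ Finset.range (p - 1 + 1), g i) - g 0 := by
        rw [Finset.sum_range_succ' g (p - 1)]; ring
    _ = (∑ i ∈ Finset.range (p - 1), g i) + g (p - 1) - g 0 := by
        rw [Finset.sum_range_succ]
    _ = ∑ i ∈ Finset.range (p - 1), g i := by rw [hgcycle]; ring
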